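/- Let k and t be positive integers and let G be a finite simple graph equipped with a linear ordering v_1 < v_2 < … < v_n of its vertices. If χ(G) > k^t and χ(N^L(v)) ≤ t for every vertex v, then G contains a triangle-free subgraph H with χ(H) > k. -/

import Mathlib

open scoped Classical

theorem rodl_lemma_left_neighborhoods (k t : ℕ) (hk : 0 < k) (ht : 0 < t)
    (V : Type) [Fintype V] [LinearOrder V] (G : SimpleGraph V)
    (hchi : ((k ^ t : ℕ) : ℕ∞) < G.chromaticNumber)
    (hleft : ∀ v : V,
      (G.induce {u | G.Adj u v ∧ u < v}).chromaticNumber ≤ (t : ℕ∞)) :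
    ∃ H : G.Subgraph, H.coe.CliqueFree 3 ∧ (k : ℕ∞) < H.coe.chromaticNumber := by
  by_contra hcon
  push_neg at hcon
  have hcolL : ∀ v : V, (G.induce {u | G.Adj u v ∧ u < v}).Colorable t := fun v =>
    (SimpleGraph.chromaticNumber_le_iff_colorable).1 (hleft v)
  let C : ∀ v : V, (G.induce {u | G.Adj u v ∧ u < v}).Coloring (Fin t) :=
    fun v => (hcolL v).some
  let f : V → V → Fin t := fun u v =>
    if h : G.Adj u v ∧ u < v then C v ⟨u, h⟩ else ⟨0, ht⟩
  have hf : ∀ u v (h : G.Adj u v ∧ u < v), f u v = C v ⟨u, h⟩ := by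
    intro u v h; simp only [f, dif_pos h]
  let H : Fin t → G.Subgraph := fun i =>
    { verts := Set.univ
      Adj := fun u v => G.Adj u v ∧ ((u < v ∧ f u v = i) ∨ (v < u ∧ f v u = i))
      adj_sub := fun h => h.1
      edge_vert := fun _ => trivial
      symm := ⟨fun u v h => ⟨h.1.symm, h.2.symm⟩⟩ }
  -- each H i is triangle-free
  have noTri : ∀ (i : Fin t) (x y z : V), x < y → y < z →
      (H i).Adj x y → (H i).Adj x z → (H i).Adj y z → False := by
    intro i x y z hxy hyz hAxy hAxz hAyz
    have hxz : x < z := hxy.trans hyz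
    have hfxz : f x z = i := by
      rcases hAxz.2 with h | h
      · exact h.2
      · exact absurd h.1 (asymm hxz)
    have hfyz : f y z = i := by
      rcases hAyz.2 with h | h
      · exact h.2
      · exact absurd h.1 (asymm hyz)
    have hx : G.Adj x z ∧ x < z := ⟨hAxz.1, hxz⟩
    have hy : G.Adj y z ∧ y < z := ⟨hAyz.1, hyz⟩
    have hne : C z ⟨x, hx⟩ ≠ C z ⟨y, hy⟩ := by
      apply (C z).valid
      show G.Adj x y
      exact hAxy.1
    apply hne
    rw [← hf x z hx, ← hf y z hy, hfxz, hfyz]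
  have noTri3 : ∀ (i : Fin t) (u v w : V),
      (H i).Adj u v → (H i).Adj u w → (H i).Adj v w → False := by
    intro i u v w huv huw hvw
    rcases lt_trichotomy u v with h1 | h1 | h1
    · rcases lt_trichotomy v w with h2 | h2 | h2
      · exact noTri i u v w h1 h2 huv huw hvw
      · exact hvw.1.ne h2
      · rcases lt_trichotomy u w with h3 | h3 | h3
        · exact noTri i u w v h3 h2 huw huv ((H i).adj_symm hvw)
        · exact huw.1.ne h3
        · exact noTri i w u v h3 h1 ((H i).adj_symm huw) ((H i).adj_symm hvw) huv
    · exact huv.1.ne h1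
    · rcases lt_trichotomy u w with h2 | h2 | h2
      · exact noTri i v u w h1 h2 ((H i).adj_symm huv) hvw huw
      · exact huw.1.ne h2
      · rcases lt_trichotomy v w with h3 | h3 | h3
        · exact noTri i v w u h3 h2 hvw ((H i).adj_symm huv) ((H i).adj_symm huw)
        · exact hvw.1.ne h3
        · exact noTri i w v u h3 h1 ((H i).adj_symm hvw) ((H i).adj_symm huw) ((H i).adj_symm huv)
  have hTF : ∀ i : Fin t, (H i).coe.CliqueFree 3 := by
    intro i s hs
    rw [SimpleGraph.is3Clique_iff] at hs
    obtain ⟨a, b, c, hab, hac, hbc, -⟩ := hs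
    exact noTri3 i a b c hab hac hbc
  have hcolH : ∀ i : Fin t, (H i).coe.Colorable k := fun i =>
    (SimpleGraph.chromaticNumber_le_iff_colorable).1 (hcon (H i) (hTF i))
  let col : ∀ i : Fin t, (H i).coe.Coloring (Fin k) := fun i => (hcolH i).some
  have Ccol : G.Coloring (Fin t → Fin k) := by
    apply SimpleGraph.Coloring.mk (fun v i => col i ⟨v, trivial⟩)
    intro u v hadj heq
    have key : ∀ x y : V, x < y → G.Adj x y →
        (fun i => col i ⟨x, trivial⟩ : Fin t → Fin k) ≠
        (fun i => col i ⟨y, trivial⟩) := by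
      intro x y hlt hxy hfeq
      have hH : (H (f x y)).Adj x y := ⟨hxy, Or.inl ⟨hlt, rfl⟩⟩
      have hne : col (f x y) ⟨x, trivial⟩ ≠ col (f x y) ⟨y, trivial⟩ := by
        apply (col (f x y)).valid
        exact hH
      exact hne (congrFun hfeq (f x y))
    rcases lt_trichotomy u v with h | h | h
    · exact key u v h hadj heq
    · exact hadj.ne h
    · exact key v u h hadj.symm heq.symm
  have hcolG : G.Colorable (k ^ t) := by
    have := Ccol.colorable
    rwa [Fintype.card_fun, Fintype.card_fin, Fintype.card_fin] at this
  exact (hcolG.chromaticNumber_le).not_gt hchi
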